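/- If i and j belong to different trees (weak components) in a maximum out forest F of a digraph G and j is a root of F, then G contains no directed path from i to j. -/

import Mathlib

/-- The arc relation of a finite arc set. -/
def arcRel {V : Type*} [DecidableEq V] (F : Finset (V × V)) : V → V → Prop :=
  fun a b => (a, b) ∈ F

/-- A diverging forest: no directed cycles, and every vertex has in-degree at most 1. -/
def IsDivForest {V : Type*} [DecidableEq V] (F : Finset (V × V)) : Prop :=
  (∀ v, ¬ Relation.TransGen (arcRel F) v v) ∧
  ∀ w z₁ z₂, (z₁, w) ∈ F → (z₂, w) ∈ F → z₁ = z₂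

/-- A maximum out forest of the digraph with arc set `E`. -/
def IsMaxOutForest {V : Type*} [DecidableEq V] (E F : Finset (V × V)) : Prop :=
  F ⊆ E ∧ IsDivForest F ∧
  ∀ F' : Finset (V × V), F' ⊆ E → IsDivForest F' → F'.card ≤ F.card

/-- Connectedness by a semipath (weak connectedness) in the arc set `F`. -/
def weakReach {V : Type*} [DecidableEq V] (F : Finset (V × V)) : V → V → Prop :=
  Relation.ReflTransGen (fun a b => arcRel F a b ∨ arcRel F b a)

section Aux

variable {V : Type*} [DecidableEq V]

lemma weakReach_symm {F : Finset (V × V)} {x y : V} (h : weakReach F x y) :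
    weakReach F y x := by
  induction h with
  | refl => exact .refl
  | tail _ hstep ih => exact Relation.ReflTransGen.trans (Relation.ReflTransGen.single hstep.symm) ih

lemma weakReach_of_arc {F : Finset (V × V)} {x y : V} (h : (x, y) ∈ F) : weakReach F x y :=
  Relation.ReflTransGen.single (Or.inl h)

/-- propagation of `weakReach F · j` along directed paths of `F'`. -/
lemma wprop {F F' : Finset (V × V)} {j : V}
    (h : ∀ x y : V, (x, y) ∈ F' → weakReach F x j → weakReach F y j)
    {u v : V} (huv : Relation.ReflTransGen (arcRel F') u v) :
    weakReach F u j → weakReach F v j := by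
  induction huv with
  | refl => exact id
  | tail _ hstep ih => intro hu; exact h _ _ hstep (ih hu)

lemma wclosure {F F₀ : Finset (V × V)} {j a b : V} (hF₀ : F₀ ⊆ F) (hWb : weakReach F b j) :
    ∀ x y : V, (x, y) ∈ insert (a, b) F₀ → weakReach F x j → weakReach F y j := by
  intro x y hxy hx
  rcases Finset.mem_insert.1 hxy with heq | hmem
  · rw [Prod.mk.injEq] at heq
    obtain ⟨rfl, rfl⟩ := heq
    exact hWb
  · exact Relation.ReflTransGen.head (Or.inr (hF₀ hmem)) hx

/-- In a forest where `j` is a root, weak reachability from `j` implies directed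
reachability from `j`. -/
lemma rootdir {G : Finset (V × V)} {j : V}
    (hdeg : ∀ w z₁ z₂ : V, (z₁, w) ∈ G → (z₂, w) ∈ G → z₁ = z₂)
    (hroot : ∀ u, (u, j) ∉ G) {x : V} (h : weakReach G j x) :
    Relation.ReflTransGen (arcRel G) j x := by
  induction h with
  | refl => exact .refl
  | tail _ hstep ih =>
    rcases hstep with h1 | h2
    · exact ih.tail h1
    · rcases ih.cases_tail with rfl | ⟨z, hjz, hzb⟩
      · exact absurd h2 (hroot _)
      · rwa [hdeg _ _ _ hzb h2] at hjz

/-- Decomposition of paths in `insert (a,b) F₀`. -/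
lemma decomp {F₀ : Finset (V × V)} {a b x y : V}
    (h : Relation.TransGen (arcRel (insert (a, b) F₀)) x y) :
    Relation.TransGen (arcRel F₀) x y ∨
      (Relation.ReflTransGen (arcRel (insert (a, b) F₀)) x a ∧
       Relation.ReflTransGen (arcRel (insert (a, b) F₀)) b y) := by
  induction h with
  | single hstep =>
    rcases Finset.mem_insert.1 hstep with heq | hmem
    · rw [Prod.mk.injEq] at heq
      obtain ⟨rfl, rfl⟩ := heq
      exact Or.inr ⟨.refl, .refl⟩
    · exact Or.inl (.single hmem)
  | tail _ hstep ih =>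
    rcases Finset.mem_insert.1 hstep with heq | hmem
    · rw [Prod.mk.injEq] at heq
      obtain ⟨rfl, rfl⟩ := heq
      rcases ih with h0 | ⟨hxa, _⟩
      · exact Or.inr ⟨(Relation.TransGen.mono (fun u v hh => Finset.mem_insert_of_mem hh) _ _ h0).to_reflTransGen, .refl⟩
      · exact Or.inr ⟨hxa, .refl⟩
    · rcases ih with h0 | ⟨hxa, hby⟩
      · exact Or.inl (h0.tail hmem)
      · exact Or.inr ⟨hxa, hby.tail (Finset.mem_insert_of_mem hmem)⟩

/-- Adding an arc from outside `j`'s weak component into it (to a vertex with no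
parent in `F₀`) yields a diverging forest. -/
lemma newForest {F : Finset (V × V)} {j : V} (F₀ : Finset (V × V)) (a b : V)
    (hF₀ : F₀ ⊆ F)
    (hacy : ∀ v, ¬ Relation.TransGen (arcRel F) v v)
    (hdeg₀ : ∀ w z₁ z₂ : V, (z₁, w) ∈ F₀ → (z₂, w) ∈ F₀ → z₁ = z₂)
    (hbdeg : ∀ z, (z, b) ∉ F₀)
    (hWa : ¬ weakReach F a j) (hWb : weakReach F b j) :
    IsDivForest (insert (a, b) F₀) := by
  constructor
  · intro v hv
    rcases decomp hv with h0 | ⟨h1, h2⟩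
    · exact hacy v (Relation.TransGen.mono (fun u w hh => hF₀ hh) _ _ h0)
    · exact hWa (wprop (wclosure hF₀ hWb) (h2.trans h1) hWb)
  · intro w z₁ z₂ h1 h2
    rcases Finset.mem_insert.1 h1 with e1 | m1 <;> rcases Finset.mem_insert.1 h2 with e2 | m2
    · rw [Prod.mk.injEq] at e1 e2
      exact e1.1.trans e2.1.symm
    · rw [Prod.mk.injEq] at e1
      obtain ⟨rfl, rfl⟩ := e1
      exact absurd m2 (hbdeg _)
    · rw [Prod.mk.injEq] at e2
      obtain ⟨rfl, rfl⟩ := e2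
      exact absurd m1 (hbdeg _)
    · exact hdeg₀ _ _ _ m1 m2

/-- Contradiction from an `E`-arc `(i, j)` with `i` outside `j`'s component. -/
lemma growContra {E F : Finset (V × V)} {i j : V}
    (hFE : F ⊆ E) (hdf : IsDivForest F)
    (hmax : ∀ G : Finset (V × V), G ⊆ E → IsDivForest G → G.card ≤ F.card)
    (hdiff : ¬ weakReach F i j) (hroot : ∀ u, (u, j) ∉ F)
    (hij : (i, j) ∈ E) : False := by
  have hdf' : IsDivForest (insert (i, j) F) :=
    newForest F i j (Finset.Subset.refl F) hdf.1 hdf.2 hroot hdiff .refl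
  have hle := hmax _ (Finset.insert_subset hij hFE) hdf'
  rw [Finset.card_insert_of_notMem (hroot i)] at hle
  omega

lemma main {V : Type*} [DecidableEq V] (E : Finset (V × V)) (j : V) :
    ∀ (l : List V) (F : Finset (V × V)) (i : V),
      F ⊆ E → IsDivForest F →
      (∀ G : Finset (V × V), G ⊆ E → IsDivForest G → G.card ≤ F.card) →
      ¬ weakReach F i j → (∀ u, (u, j) ∉ F) →
      List.Chain (arcRel E) i (l ++ [j]) → False := by
  intro l
  induction l with
  | nil =>
    intro F i hFE hdf hmax hdiff hroot hchain
    simp only [List.nil_append] at hchain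
    cases hchain with
    | cons_cons hij _ => exact growContra hFE hdf hmax hdiff hroot hij
  | cons x l' ih =>
    intro F i hFE hdf hmax hdiff hroot hchain
    simp only [List.cons_append] at hchain
    cases hchain with
    | cons_cons hix hch =>
      by_cases hWx : weakReach F x j
      · by_cases hxj : x = j
        · subst hxj
          exact growContra hFE hdf hmax hdiff hroot hix
        · -- swap an arc
          obtain ⟨p, hjp, hpx⟩ :
              ∃ p, Relation.ReflTransGen (arcRel F) j p ∧ (p, x) ∈ F := by
            have hdir := rootdir hdf.2 hroot (weakReach_symm hWx)
            rcases hdir.cases_tail with heq | ⟨z, hjz, hzx⟩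
            · exact absurd heq hxj
            · exact ⟨z, hjz, hzx⟩
          set F₀ := F.erase (p, x) with hF₀def
          have hF₀ : F₀ ⊆ F := Finset.erase_subset _ _
          have hdeg₀ : ∀ w z₁ z₂ : V, (z₁, w) ∈ F₀ → (z₂, w) ∈ F₀ → z₁ = z₂ :=
            fun w z₁ z₂ h1 h2 => hdf.2 w z₁ z₂ (hF₀ h1) (hF₀ h2)
          have hbdeg : ∀ z, (z, x) ∉ F₀ := by
            intro z hz
            have hzF := Finset.mem_of_mem_erase hz
            have := hdf.2 x z p hzF hpx
            subst this
            exact (Finset.ne_of_mem_erase hz) rfl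
          set F' := insert (i, x) F₀ with hF'def
          have hdf' : IsDivForest F' :=
            newForest F₀ i x hF₀ hdf.1 hdeg₀ hbdeg hdiff hWx
          have hixF : (i, x) ∉ F := by
            intro hmem
            exact hdiff ((weakReach_of_arc hmem).trans hWx)
          have hcard : F'.card = F.card := by
            rw [hF'def, Finset.card_insert_of_notMem (fun hc => hixF (hF₀ hc)),
              hF₀def, Finset.card_erase_of_mem hpx]
            have : 1 ≤ F.card := Finset.card_pos.2 ⟨_, hpx⟩
            omega
          have hF'E : F' ⊆ E :=
            Finset.insert_subset hix ((Finset.erase_subset _ _).trans hFE)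
          have hmax' : ∀ G : Finset (V × V), G ⊆ E → IsDivForest G → G.card ≤ F'.card := by
            intro G hGE hGdf; rw [hcard]; exact hmax G hGE hGdf
          have hroot' : ∀ u, (u, j) ∉ F' := by
            intro u hu
            rcases Finset.mem_insert.1 hu with heq | hmem
            · rw [Prod.mk.injEq] at heq
              exact hxj heq.2.symm
            · exact hroot u (hF₀ hmem)
          have hdiff' : ¬ weakReach F' x j := by
            intro h
            have hdir := rootdir hdf'.2 hroot' (weakReach_symm h)
            rcases hdir.cases_tail with heq | ⟨z, hjz, hzx⟩
            · exact hxj heq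
            · have hzi : z = i :=
                hdf'.2 x z i hzx (Finset.mem_insert_self _ _)
              subst hzi
              exact hdiff (wprop (wclosure hF₀ hWx) hjz .refl)
          exact ih F' x hF'E hdf' hmax' hdiff' hroot' hch
      · exact ih F x hFE hdf hmax hWx hroot hch

lemma transGen_chain {α : Type*} {r : α → α → Prop} {a b : α}
    (h : Relation.TransGen r a b) : ∃ l : List α, List.Chain r a (l ++ [b]) := by
  induction h with
  | single h => exact ⟨[], List.Chain.cons h List.Chain.nil⟩
  | @tail b' c _ hbc ih =>
    obtain ⟨l, hl⟩ := ih
    refine ⟨l ++ [b'], ?_⟩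
    rw [List.append_assoc]
    exact List.isChain_cons_split (c := b') (l₂ := [c]) |>.2 ⟨hl, List.Chain.cons hbc List.Chain.nil⟩

end Aux

/-- If `i` and `j` lie in different trees (weak components) of a maximum out forest `F`
and `j` is a root of `F`, then `G` contains no directed path from `i` to `j`. -/
theorem stmt5 {V : Type*} [DecidableEq V] (E F : Finset (V × V)) (i j : V)
    (hF : IsMaxOutForest E F)
    (hdiff : ¬ weakReach F i j)
    (hroot : ∀ u, (u, j) ∉ F) :
    ¬ Relation.TransGen (arcRel E) i j := by
  intro htrans
  obtain ⟨l, hl⟩ := transGen_chain htrans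
  exact main E j l F i hF.1 hF.2.1 hF.2.2 hdiff hroot hl
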